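/- Let S be a TCK family for a graph G generating the WOT-closed algebra 𝔖, and let V ⊆ H be a coinvariant subspace (invariant for 𝔖*). Then the closed subspace 𝔖[V] = closure of 𝔖·V is reducing for 𝔖: it is invariant under all S_μ and all S_μ*. -/

import Mathlib

structure DirectedGraph where
  V : Type
  E : Type
  src : E → V
  rng : E → V

namespace DirectedGraph

/-- Two edges are composable (as in `e₂ e₁`, `e₂` after `e₁`) when `s(e₂) = r(e₁)`. -/
def Composable (G : DirectedGraph) (a b : G.E) : Prop := G.src a = G.rng b

/-- A list `[eₙ, …, e₁]` of edges is a path when consecutive edges are composable. -/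
def IsPathList (G : DirectedGraph) (μ : List G.E) : Prop := List.Chain' G.Composable μ

/-- The path `μ` has source `v` (vacuous for the empty path). -/
def SrcIs (G : DirectedGraph) (μ : List G.E) (v : G.V) : Prop :=
  ∀ e ∈ μ.getLast?, G.src e = v

/-- The path `μ`, regarded as a path with source `v`, has range `w`. -/
def RngIs (G : DirectedGraph) (v : G.V) (μ : List G.E) (w : G.V) : Prop :=
  match μ with
  | [] => v = w
  | e :: _ => G.rng e = w

/-- `μ` is a path with source `v`. -/
def IsPathAt (G : DirectedGraph) (v : G.V) (μ : List G.E) : Prop :=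
  G.IsPathList μ ∧ G.SrcIs μ v

/-- `μ` is a cycle at `v` : a path with source and range `v`. -/
def IsCycleAt (G : DirectedGraph) (v : G.V) (μ : List G.E) : Prop :=
  G.IsPathAt v μ ∧ G.RngIs v μ v

end DirectedGraph

/-- A Toeplitz–Cuntz–Krieger family for the directed graph `G` on the Hilbert space `H`:
pairwise orthogonal projections `Sv v`, partial isometries `Se e` with
`(Se e)* (Se e) = Sv (s e)`, and `∑_{e ∈ F} (Se e)(Se e)* ≤ Sv v` for finite `F ⊆ r⁻¹(v)`. -/
structure TCKFamily (G : DirectedGraph) (H : Type) [NormedAddCommGroup H]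
    [InnerProductSpace ℂ H] [CompleteSpace H] where
  Sv : G.V → H →L[ℂ] H
  Se : G.E → H →L[ℂ] H
  sv_sa : ∀ v, IsSelfAdjoint (Sv v)
  sv_idem : ∀ v, Sv v * Sv v = Sv v
  sv_orth : ∀ v w, v ≠ w → Sv v * Sv w = 0
  se_isom : ∀ e, ContinuousLinearMap.adjoint (Se e) * Se e = Sv (G.src e)
  tck_ineq : ∀ (v : G.V) (F : Finset G.E), (∀ e ∈ F, G.rng e = v) →
    ContinuousLinearMap.IsPositive
      (Sv v - ∑ e ∈ F, Se e * ContinuousLinearMap.adjoint (Se e))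

/-- The operator associated to a path `μ` with source `v`: the product of the edge
operators along `μ`, with the convention that the empty path at `v` gives `Sv v`. -/
noncomputable def pathOp {G : DirectedGraph} {H : Type} [NormedAddCommGroup H]
    [InnerProductSpace ℂ H] [CompleteSpace H]
    (S : TCKFamily G H) (v : G.V) (μ : List G.E) : H →L[ℂ] H :=
  match μ with
  | [] => S.Sv v
  | e :: rest => (((e :: rest)).map S.Se).prod

/-- The closed subspace `𝔖[V]` generated by a subspace `V` under the free
semigroupoid algebra: the closure of `V` together with all `S_μ ξ`, `ξ ∈ V`. -/
noncomputable def genSubspace {H : Type} [NormedAddCommGroup H] [InnerProductSpace ℂ H]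
    [CompleteSpace H] {G : DirectedGraph} (S : TCKFamily G H) (Vs : Submodule ℂ H) :
    Submodule ℂ H :=
  (Vs ⊔ Submodule.span ℂ {y : H | ∃ (u : G.V) (ν : List G.E) (ξ : H),
    G.IsPathAt u ν ∧ ξ ∈ Vs ∧ y = pathOp S u ν ξ}).topologicalClosure

section OpLemmas
open ContinuousLinearMap
variable {H : Type} [NormedAddCommGroup H] [InnerProductSpace ℂ H] [CompleteSpace H]
  {G : DirectedGraph} (S : TCKFamily G H)

lemma adj_mul (A B : H →L[ℂ] H) : adjoint (A * B) = adjoint B * adjoint A := by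
  rw [← star_eq_adjoint, star_mul, star_eq_adjoint, star_eq_adjoint]

lemma sandwich_zero {A B C D : H →L[ℂ] H} (h : B * C = 0) : (A * B) * (C * D) = 0 := by
  rw [mul_assoc, ← mul_assoc B, h, zero_mul, mul_zero]

lemma tck_se_mul_sv (e : G.E) : S.Se e * S.Sv (G.src e) = S.Se e := by
  ext x
  have hz : S.Sv (G.src e) (S.Sv (G.src e) x - x) = 0 := by
    have h1 := DFunLike.congr_fun (S.sv_idem (G.src e)) x
    rw [ContinuousLinearMap.mul_apply] at h1
    rw [map_sub, h1, sub_self]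
  have h1 : adjoint (S.Se e) (S.Se e (S.Sv (G.src e) x - x)) = 0 := by
    have h2 := DFunLike.congr_fun (S.se_isom e) (S.Sv (G.src e) x - x)
    rw [ContinuousLinearMap.mul_apply] at h2
    rw [h2, hz]
  have h0 : S.Se e (S.Sv (G.src e) x - x) = 0 := by
    refine inner_self_eq_zero (𝕜 := ℂ).mp ?_
    rw [← adjoint_inner_right, h1, inner_zero_right]
  rw [map_sub, sub_eq_zero] at h0
  exact h0

lemma tck_sv_mul_se (e : G.E) : S.Sv (G.rng e) * S.Se e = S.Se e := by
  have step : ∀ z : H, S.Sv (G.rng e) z = 0 → adjoint (S.Se e) z = 0 := by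
    intro z hz
    have hpos := S.tck_ineq (G.rng e) {e} (by simp)
    rw [Finset.sum_singleton] at hpos
    have h2 := hpos.inner_nonneg_left z
    have h3 : (S.Sv (G.rng e) - S.Se e * adjoint (S.Se e)) z
        = - (S.Se e (adjoint (S.Se e) z)) := by
      rw [ContinuousLinearMap.sub_apply, ContinuousLinearMap.mul_apply, hz, zero_sub]
    rw [h3] at h2
    have h4 : (inner ℂ (S.Se e (adjoint (S.Se e) z)) z : ℂ)
        = inner ℂ (adjoint (S.Se e) z) (adjoint (S.Se e) z) :=
      (adjoint_inner_right (S.Se e) (adjoint (S.Se e) z) z).symm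
    rw [inner_neg_left, h4] at h2
    have h5 : RCLike.re (inner ℂ (adjoint (S.Se e) z) (adjoint (S.Se e) z) : ℂ) ≤ 0 := by
      have h2' := (Complex.nonneg_iff.mp h2).1
      rw [Complex.neg_re] at h2'
      exact neg_nonneg.mp h2'
    have h6 : (inner ℂ (adjoint (S.Se e) z) (adjoint (S.Se e) z) : ℂ) = 0 := by
      have := inner_self_nonneg (𝕜 := ℂ) (x := adjoint (S.Se e) z)
      have hre : RCLike.re (inner ℂ (adjoint (S.Se e) z) (adjoint (S.Se e) z) : ℂ) = 0 :=
        le_antisymm h5 this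
      rw [← inner_self_ofReal_re, hre]
      simp
    exact inner_self_eq_zero.mp h6
  ext x
  rw [ContinuousLinearMap.mul_apply]
  set z := S.Se e x - S.Sv (G.rng e) (S.Se e x) with hzdef
  have hPz : S.Sv (G.rng e) z = 0 := by
    have h1 := DFunLike.congr_fun (S.sv_idem (G.rng e)) (S.Se e x)
    rw [ContinuousLinearMap.mul_apply] at h1
    rw [hzdef, map_sub, h1, sub_self]
  have hadjz : adjoint (S.Se e) z = 0 := step z hPz
  have hz0 : z = 0 := by
    refine inner_self_eq_zero (𝕜 := ℂ).mp ?_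
    rw [hzdef, inner_sub_left]
    have ha : (inner ℂ (S.Se e x) z : ℂ) = 0 := by
      rw [← adjoint_inner_right, hadjz, inner_zero_right]
    have hb : (inner ℂ (S.Sv (G.rng e) (S.Se e x)) z : ℂ) = 0 := by
      rw [← isSelfAdjoint_iff'.mp (S.sv_sa (G.rng e)), adjoint_inner_left, hPz,
        inner_zero_right]
    rw [← hzdef, ha, hb, sub_self]
  rw [hzdef] at hz0
  rw [sub_eq_zero] at hz0
  exact hz0.symm

lemma tck_sv_mul_se_ne (e : G.E) (v : G.V) (h : v ≠ G.rng e) : S.Sv v * S.Se e = 0 := by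
  conv_lhs => rw [← tck_sv_mul_se S e]
  rw [← mul_assoc, S.sv_orth v (G.rng e) h, zero_mul]

lemma tck_se_mul_sv_ne (e : G.E) (u : G.V) (h : u ≠ G.src e) : S.Se e * S.Sv u = 0 := by
  conv_lhs => rw [← tck_se_mul_sv S e]
  rw [mul_assoc, S.sv_orth (G.src e) u (Ne.symm h), mul_zero]

lemma tck_se_mul_se_ne (e f : G.E) (h : G.src e ≠ G.rng f) : S.Se e * S.Se f = 0 := by
  conv_lhs => rw [← tck_se_mul_sv S e, ← tck_sv_mul_se S f]
  exact sandwich_zero (S.sv_orth _ _ h)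

lemma tck_adj_se_mul_sv_rng (e : G.E) :
    adjoint (S.Se e) * S.Sv (G.rng e) = adjoint (S.Se e) := by
  conv_lhs => rw [← isSelfAdjoint_iff'.mp (S.sv_sa (G.rng e))]
  rw [← adj_mul, tck_sv_mul_se]

lemma tck_adj_se_mul_sv_ne (e : G.E) (u : G.V) (h : u ≠ G.rng e) :
    adjoint (S.Se e) * S.Sv u = 0 := by
  rw [← isSelfAdjoint_iff'.mp (S.sv_sa u), ← adj_mul, tck_sv_mul_se_ne S e u h]
  simp

lemma tck_adj_se_mul_se_ne (e f : G.E) (h : e ≠ f) : adjoint (S.Se e) * S.Se f = 0 := by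
  by_cases hr : G.rng e = G.rng f
  · classical
    ext x
    rw [ContinuousLinearMap.mul_apply, ContinuousLinearMap.zero_apply]
    have hmem : ∀ a ∈ ({e, f} : Finset G.E), G.rng a = G.rng e := by
      intro a ha
      rcases Finset.mem_insert.mp ha with h1 | h1
      · rw [h1]
      · rw [Finset.mem_singleton.mp h1, hr]
    have hpos := S.tck_ineq (G.rng e) {e, f} hmem
    rw [Finset.sum_pair h] at hpos
    have h2 := hpos.inner_nonneg_left (S.Se f x)
    set z := S.Se f x with hzdef
    have hv : S.Sv (G.rng e) z = z := by
      have := DFunLike.congr_fun (tck_sv_mul_se S f) x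
      rw [ContinuousLinearMap.mul_apply] at this
      rw [hzdef, hr, this]
    have hPf : S.Se f (adjoint (S.Se f) z) = z := by
      have h1 := DFunLike.congr_fun (S.se_isom f) x
      rw [ContinuousLinearMap.mul_apply] at h1
      have h2' := DFunLike.congr_fun (tck_se_mul_sv S f) x
      rw [ContinuousLinearMap.mul_apply] at h2'
      rw [hzdef, h1, h2']
    have h3 : (S.Sv (G.rng e) - (S.Se e * adjoint (S.Se e) + S.Se f * adjoint (S.Se f))) z
        = - (S.Se e (adjoint (S.Se e) z)) := by
      rw [ContinuousLinearMap.sub_apply, ContinuousLinearMap.add_apply, ContinuousLinearMap.mul_apply,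
        ContinuousLinearMap.mul_apply, hv, hPf]
      abel
    rw [h3] at h2
    have h4 : (inner ℂ (S.Se e (adjoint (S.Se e) z)) z : ℂ)
        = inner ℂ (adjoint (S.Se e) z) (adjoint (S.Se e) z) :=
      (adjoint_inner_right (S.Se e) (adjoint (S.Se e) z) z).symm
    rw [inner_neg_left, h4] at h2
    have h5 : RCLike.re (inner ℂ (adjoint (S.Se e) z) (adjoint (S.Se e) z) : ℂ) ≤ 0 := by
      have h2' := (Complex.nonneg_iff.mp h2).1
      rw [Complex.neg_re] at h2'
      exact neg_nonneg.mp h2'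
    have h6 : (inner ℂ (adjoint (S.Se e) z) (adjoint (S.Se e) z) : ℂ) = 0 := by
      have := inner_self_nonneg (𝕜 := ℂ) (x := adjoint (S.Se e) z)
      have hre : RCLike.re (inner ℂ (adjoint (S.Se e) z) (adjoint (S.Se e) z) : ℂ) = 0 :=
        le_antisymm h5 this
      rw [← inner_self_ofReal_re, hre]
      simp
    exact inner_self_eq_zero.mp h6
  · have h1 : adjoint (S.Se e) = adjoint (S.Se e) * S.Sv (G.rng e) :=
      (tck_adj_se_mul_sv_rng S e).symm
    conv_lhs => rw [h1, ← tck_sv_mul_se S f]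
    exact sandwich_zero (S.sv_orth _ _ hr)

end OpLemmas

section PathLemmas
open ContinuousLinearMap
variable {H : Type} [NormedAddCommGroup H] [InnerProductSpace ℂ H] [CompleteSpace H]
  {G : DirectedGraph} (S : TCKFamily G H)

lemma isPathAt_tail {u : G.V} {f : G.E} {rest : List G.E}
    (h : G.IsPathAt u (f :: rest)) : G.IsPathAt u rest := by
  obtain ⟨hc, hs⟩ := h
  refine ⟨hc.tail, ?_⟩
  cases rest with
  | nil => intro a ha; simp at ha
  | cons g t =>
    intro a ha
    apply hs a
    rw [List.getLast?_cons_cons]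
    exact ha

lemma pathOp_cons {u : G.V} {f : G.E} {rest : List G.E} (h : G.IsPathAt u (f :: rest)) :
    pathOp S u (f :: rest) = S.Se f * pathOp S u rest := by
  cases rest with
  | nil =>
    have hsrc : G.src f = u := h.2 f (by simp)
    show (List.map S.Se [f]).prod = S.Se f * S.Sv u
    rw [← hsrc, tck_se_mul_sv]
    simp
  | cons g t =>
    show (List.map S.Se (f :: g :: t)).prod = S.Se f * (List.map S.Se (g :: t)).prod
    rw [List.map_cons, List.prod_cons]

lemma isPathAt_cons {u : G.V} {ν : List G.E} {e : G.E}
    (h : G.IsPathAt u ν) (hr : G.RngIs u ν (G.src e)) : G.IsPathAt u (e :: ν) := by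
  obtain ⟨hc, hs⟩ := h
  cases ν with
  | nil =>
    have hu : u = G.src e := hr
    refine ⟨List.isChain_singleton _, ?_⟩
    intro a ha
    simp at ha
    rw [← ha, ← hu]
  | cons f t =>
    have hrf : G.rng f = G.src e := hr
    refine ⟨List.isChain_cons_cons.mpr ⟨hrf.symm, hc⟩, ?_⟩
    intro a ha
    apply hs a
    rw [List.getLast?_cons_cons] at ha
    exact ha

lemma sv_mul_pathOp {u v : G.V} {ν : List G.E} (h : G.RngIs u ν v) :
    S.Sv v * pathOp S u ν = pathOp S u ν := by
  cases ν with
  | nil =>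
    have hu : u = v := h
    subst hu
    exact S.sv_idem u
  | cons f t =>
    have hrf : G.rng f = v := h
    show S.Sv v * (List.map S.Se (f :: t)).prod = (List.map S.Se (f :: t)).prod
    rw [List.map_cons, List.prod_cons, ← mul_assoc, ← hrf, tck_sv_mul_se]

lemma sv_mul_pathOp_ne {u v : G.V} {ν : List G.E} (h : ¬ G.RngIs u ν v) :
    S.Sv v * pathOp S u ν = 0 := by
  cases ν with
  | nil =>
    have hu : u ≠ v := h
    exact S.sv_orth v u (Ne.symm hu)
  | cons f t =>
    have hrf : G.rng f ≠ v := h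
    show S.Sv v * (List.map S.Se (f :: t)).prod = 0
    rw [List.map_cons, List.prod_cons, ← mul_assoc, tck_sv_mul_se_ne S f v (Ne.symm hrf),
      zero_mul]

lemma se_mul_pathOp_ne {u : G.V} {ν : List G.E} {e : G.E} (h : ¬ G.RngIs u ν (G.src e)) :
    S.Se e * pathOp S u ν = 0 := by
  cases ν with
  | nil =>
    have hu : u ≠ G.src e := h
    exact tck_se_mul_sv_ne S e u hu
  | cons f t =>
    have hrf : G.rng f ≠ G.src e := h
    show S.Se e * (List.map S.Se (f :: t)).prod = 0
    rw [List.map_cons, List.prod_cons, ← mul_assoc, tck_se_mul_se_ne S e f (Ne.symm hrf),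
      zero_mul]

variable (Vs : Submodule ℂ H)

lemma vs_le_gen : Vs ≤ genSubspace S Vs :=
  le_trans le_sup_left (Submodule.le_topologicalClosure _)

lemma pathOp_mem_gen {u : G.V} {ν : List G.E} {ξ : H} (hp : G.IsPathAt u ν) (hξ : ξ ∈ Vs) :
    pathOp S u ν ξ ∈ genSubspace S Vs :=
  Submodule.le_topologicalClosure _
    (Submodule.mem_sup_right (Submodule.subset_span ⟨u, ν, ξ, hp, hξ, rfl⟩))

lemma preserve (T : H →L[ℂ] H)
    (h1 : ∀ x ∈ Vs, T x ∈ genSubspace S Vs)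
    (h2 : ∀ (u : G.V) (ν : List G.E) (ξ : H), G.IsPathAt u ν → ξ ∈ Vs →
      T (pathOp S u ν ξ) ∈ genSubspace S Vs) :
    ∀ x ∈ genSubspace S Vs, T x ∈ genSubspace S Vs := by
  intro x hx
  set M := Vs ⊔ Submodule.span ℂ {y : H | ∃ (u : G.V) (ν : List G.E) (ξ : H),
    G.IsPathAt u ν ∧ ξ ∈ Vs ∧ y = pathOp S u ν ξ} with hM
  have hle : M ≤ Submodule.comap (T : H →ₗ[ℂ] H) (genSubspace S Vs) := by
    apply sup_le
    · intro a ha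
      exact h1 a ha
    · rw [Submodule.span_le]
      rintro y ⟨u, ν, ξ, hp, hξ, rfl⟩
      exact h2 u ν ξ hp hξ
  have hclosed : IsClosed (T ⁻¹' (genSubspace S Vs : Set H)) :=
    (Submodule.isClosed_topologicalClosure _).preimage T.continuous
  have hsub : (M : Set H) ⊆ T ⁻¹' (genSubspace S Vs : Set H) := fun y hy => hle hy
  have hcl : closure (M : Set H) ⊆ T ⁻¹' (genSubspace S Vs : Set H) :=
    closure_minimal hsub hclosed
  have hx' : x ∈ closure (M : Set H) := hx
  exact hcl hx'

lemma sv_apply_gen (v : G.V) {u : G.V} {ν : List G.E} {ξ : H}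
    (hp : G.IsPathAt u ν) (hξ : ξ ∈ Vs) :
    S.Sv v (pathOp S u ν ξ) ∈ genSubspace S Vs := by
  by_cases hr : G.RngIs u ν v
  · have h := DFunLike.congr_fun (sv_mul_pathOp S hr) ξ
    rw [ContinuousLinearMap.mul_apply] at h
    rw [h]
    exact pathOp_mem_gen S Vs hp hξ
  · have h := DFunLike.congr_fun (sv_mul_pathOp_ne S hr) ξ
    rw [ContinuousLinearMap.mul_apply, ContinuousLinearMap.zero_apply] at h
    rw [h]
    exact (genSubspace S Vs).zero_mem

lemma se_apply_gen (e : G.E) {u : G.V} {ν : List G.E} {ξ : H}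
    (hp : G.IsPathAt u ν) (hξ : ξ ∈ Vs) :
    S.Se e (pathOp S u ν ξ) ∈ genSubspace S Vs := by
  by_cases hr : G.RngIs u ν (G.src e)
  · have hp' : G.IsPathAt u (e :: ν) := isPathAt_cons hp hr
    have h : S.Se e (pathOp S u ν ξ) = pathOp S u (e :: ν) ξ := by
      rw [pathOp_cons S hp', ContinuousLinearMap.mul_apply]
    rw [h]
    exact pathOp_mem_gen S Vs hp' hξ
  · have h := DFunLike.congr_fun (se_mul_pathOp_ne S hr) ξ
    rw [ContinuousLinearMap.mul_apply, ContinuousLinearMap.zero_apply] at h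
    rw [h]
    exact (genSubspace S Vs).zero_mem

lemma adj_se_apply_gen (hcoE : ∀ (e : G.E) (x : H), x ∈ Vs → adjoint (S.Se e) x ∈ Vs)
    (e : G.E) {u : G.V} {ν : List G.E} {ξ : H}
    (hp : G.IsPathAt u ν) (hξ : ξ ∈ Vs) :
    adjoint (S.Se e) (pathOp S u ν ξ) ∈ genSubspace S Vs := by
  cases ν with
  | nil =>
    show adjoint (S.Se e) (S.Sv u ξ) ∈ genSubspace S Vs
    by_cases hu : u = G.rng e
    · subst hu
      have h := DFunLike.congr_fun (tck_adj_se_mul_sv_rng S e) ξ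
      rw [ContinuousLinearMap.mul_apply] at h
      rw [h]
      exact vs_le_gen S Vs (hcoE e ξ hξ)
    · have h := DFunLike.congr_fun (tck_adj_se_mul_sv_ne S e u hu) ξ
      rw [ContinuousLinearMap.mul_apply, ContinuousLinearMap.zero_apply] at h
      rw [h]
      exact (genSubspace S Vs).zero_mem
  | cons f rest =>
    have hrest : G.IsPathAt u rest := isPathAt_tail hp
    rw [pathOp_cons S hp, ContinuousLinearMap.mul_apply]
    by_cases hef : e = f
    · subst hef
      have h := DFunLike.congr_fun (S.se_isom e) (pathOp S u rest ξ)
      rw [ContinuousLinearMap.mul_apply] at h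
      rw [h]
      exact sv_apply_gen S Vs (G.src e) hrest hξ
    · have h := DFunLike.congr_fun (tck_adj_se_mul_se_ne S e f hef) (pathOp S u rest ξ)
      rw [ContinuousLinearMap.mul_apply, ContinuousLinearMap.zero_apply] at h
      rw [h]
      exact (genSubspace S Vs).zero_mem

lemma sv_full (hcoV : ∀ (u : G.V) (x : H), x ∈ Vs → adjoint (S.Sv u) x ∈ Vs) (v : G.V) :
    ∀ x ∈ genSubspace S Vs, S.Sv v x ∈ genSubspace S Vs := by
  apply preserve
  · intro x hx
    have h : S.Sv v x = adjoint (S.Sv v) x := by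
      rw [isSelfAdjoint_iff'.mp (S.sv_sa v)]
    rw [h]
    exact vs_le_gen S Vs (hcoV v x hx)
  · intro u ν ξ hp hξ
    exact sv_apply_gen S Vs v hp hξ

lemma se_full (e : G.E) :
    ∀ x ∈ genSubspace S Vs, S.Se e x ∈ genSubspace S Vs := by
  apply preserve
  · intro x hx
    have hpe : G.IsPathAt (G.src e) [e] := by
      refine ⟨List.isChain_singleton _, ?_⟩
      intro a ha
      simp at ha
      rw [← ha]
    have h : S.Se e x = pathOp S (G.src e) [e] x := by
      show S.Se e x = (List.map S.Se [e]).prod x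
      simp
    rw [h]
    exact pathOp_mem_gen S Vs hpe hx
  · intro u ν ξ hp hξ
    exact se_apply_gen S Vs e hp hξ

lemma adj_se_full (hcoE : ∀ (e : G.E) (x : H), x ∈ Vs → adjoint (S.Se e) x ∈ Vs) (e : G.E) :
    ∀ x ∈ genSubspace S Vs, adjoint (S.Se e) x ∈ genSubspace S Vs := by
  apply preserve
  · intro x hx
    exact vs_le_gen S Vs (hcoE e x hx)
  · intro u ν ξ hp hξ
    exact adj_se_apply_gen S Vs hcoE e hp hξ

end PathLemmas

/-- If `Vs` is a coinvariant subspace for the free semigroupoid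
algebra generated by a TCK family `S` (invariant under all adjoints `S_v*`, `S_e*`),
then `𝔖[Vs]` is reducing: invariant under every `S_μ` and every `S_μ*`. -/
theorem stmt7 {H : Type} [NormedAddCommGroup H] [InnerProductSpace ℂ H] [CompleteSpace H]
    (G : DirectedGraph) (S : TCKFamily G H) (Vs : Submodule ℂ H)
    (hcoV : ∀ (u : G.V) (x : H), x ∈ Vs → ContinuousLinearMap.adjoint (S.Sv u) x ∈ Vs)
    (hcoE : ∀ (e : G.E) (x : H), x ∈ Vs → ContinuousLinearMap.adjoint (S.Se e) x ∈ Vs) :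
    ∀ (w : G.V) (μ : List G.E), G.IsPathAt w μ →
      ∀ x ∈ genSubspace S Vs,
        pathOp S w μ x ∈ genSubspace S Vs ∧
        ContinuousLinearMap.adjoint (pathOp S w μ) x ∈ genSubspace S Vs := by
  intro w μ
  induction μ with
  | nil =>
    intro _ x hx
    constructor
    · exact sv_full S Vs hcoV w x hx
    · show ContinuousLinearMap.adjoint (S.Sv w) x ∈ genSubspace S Vs
      rw [ContinuousLinearMap.isSelfAdjoint_iff'.mp (S.sv_sa w)]
      exact sv_full S Vs hcoV w x hx
  | cons f rest ih =>
    intro h x hx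
    have hrest : G.IsPathAt w rest := isPathAt_tail h
    constructor
    · rw [pathOp_cons S h, ContinuousLinearMap.mul_apply]
      exact se_full S Vs f _ ((ih hrest x hx).1)
    · rw [pathOp_cons S h, adj_mul, ContinuousLinearMap.mul_apply]
      exact (ih hrest _ (adj_se_full S Vs hcoE f x hx)).2
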